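/- Suppose 2 ≤ 2δ < ⌊n(q^r − 1)/(q^{2r} − 1)⌋. Suppose κ ≥ 1 and H̃_0, H̃_1 are κ×n matrices over F_{q²} such that: the nonzero rows of H̃_0 and H̃_1 taken together are linearly independent; H̃_0 has no zero row; and {v ∈ F_{q²}^n : v·H̃_0ᵗ = 0 and v·H̃_1ᵗ = 0} = C, the narrow-sense BCH code over F_{q²} of designed distance 2δ+1. Let G(D) = H̃_0 + H̃_1·D and V = {u(D)G(D) : u(D) ∈ F_{q²}[D]^κ}. Then V is self-orthogonal with respect to the Hermitian inner product: for all u(D), w(D) ∈ F_{q²}[D]^κ, the codewords v(D) = u(D)G(D) and x(D) = w(D)G(D) satisfy Σ_t Σ_{j=1}^n v_{t,j} · (x_{t,j})^q = 0, where v_t, x_t ∈ F_{q²}^n are the coefficient vectors of D^t. -/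

import Mathlib

open Finset Polynomial

lemma aux_charP (F : Type*) [Field F] [Fintype F] {p m : ℕ} (hp : p.Prime) (hm : 0 < m)
    (h : Fintype.card F = p ^ m) : CharP F p := by
  haveI := ringChar.charP F
  obtain ⟨n', hp', hcard⟩ := FiniteField.card F (ringChar F)
  have hdvd : ringChar F ∣ p ^ m := by
    rw [← h, hcard]
    exact dvd_pow_self _ (by positivity)
  have : ringChar F = p := by
    have := hp'.dvd_of_dvd_pow hdvd
    exact (Nat.prime_dvd_prime_iff_eq hp' hp).mp this
  rw [← this]
  exact ringChar.charP F

lemma aux_notdvd {q n r δ : ℕ} (hq : 2 ≤ q) (hr : 0 < r)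
    (hmod : (q ^ 2) ^ r ≡ 1 [MOD n])
    (hb : (2 * δ + 1) * (q ^ r + 1) ≤ n)
    {z z' i : ℕ} (hz1 : 1 ≤ z) (hz2 : z ≤ 2 * δ) (hz'1 : 1 ≤ z') (hz'2 : z' ≤ 2 * δ)
    (hi : i < r) : ¬ n ∣ z * q ^ (2 * i + 1) + z' := by
  have hqr : 2 ≤ q ^ r := le_trans hq (Nat.le_self_pow (by omega) q)
  have hδ1 : 1 ≤ δ := by omega
  have hn9 : 9 ≤ n := le_trans (by nlinarith) hb
  have key : ∀ e a b : ℕ, e ≤ r → 1 ≤ a → a ≤ 2 * δ → 1 ≤ b → b ≤ 2 * δ →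
      ¬ n ∣ a * q ^ e + b := by
    intro e a b he ha1 ha2 hb1 hb2 hdvd
    have hqe : q ^ e ≤ q ^ r := Nat.pow_le_pow_right (by omega) he
    have hlt : a * q ^ e + b < n := by
      have h1 : a * q ^ e + b ≤ 2 * δ * q ^ r + 2 * δ := by
        have := Nat.mul_le_mul ha2 hqe
        omega
      have h2 : 2 * δ * q ^ r + 2 * δ < (2 * δ + 1) * (q ^ r + 1) := by nlinarith
      omega
    have hpos : 0 < a * q ^ e + b := by positivity
    exact absurd (Nat.le_of_dvd hpos hdvd) (by omega)
  intro hdvd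
  rcases le_or_gt (2 * i + 1) r with hcase | hcase
  · exact key (2 * i + 1) z z' hcase hz1 hz2 hz'1 hz'2 hdvd
  · set e := 2 * r - (2 * i + 1) with he
    haveI : NeZero n := ⟨by omega⟩
    have hcast : ((q : ZMod n)) ^ (2 * r) = 1 := by
      have h1 : (((q ^ 2) ^ r : ℕ) : ZMod n) = ((1 : ℕ) : ZMod n) :=
        (ZMod.natCast_eq_natCast_iff _ _ _).mpr hmod
      push_cast at h1
      rw [← pow_mul] at h1
      exact h1
    have h0 : ((z : ZMod n) * (q : ZMod n) ^ (2 * i + 1) + (z' : ZMod n)) = 0 := by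
      have := (ZMod.natCast_eq_zero_iff _ n).mpr hdvd
      push_cast at this
      exact this
    have hpow : (q : ZMod n) ^ (2 * i + 1) * (q : ZMod n) ^ e = 1 := by
      rw [← pow_add, show 2 * i + 1 + e = 2 * r by omega]
      exact hcast
    have h2 : ((z' * q ^ e + z : ℕ) : ZMod n) = 0 := by
      push_cast
      linear_combination (q : ZMod n) ^ e * h0 - (z : ZMod n) * hpow
    exact key e z' z (by omega) hz'1 hz'2 hz1 hz2
      ((ZMod.natCast_eq_zero_iff _ n).mp h2)

lemma aux_geom {E : Type*} [Field E] {γ : E} {n : ℕ}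
    (hγ : IsPrimitiveRoot γ n) {m : ℕ} (h : ¬ n ∣ m) :
    ∑ j : Fin n, γ ^ ((j : ℕ) * m) = 0 := by
  have h1 : γ ^ m ≠ 1 := fun he => h ((hγ.pow_eq_one_iff_dvd m).mp he)
  have h2 : (γ ^ m) ^ n = 1 := by
    rw [← pow_mul, mul_comm, pow_mul, hγ.pow_eq_one, one_pow]
  have key : ∑ j ∈ range n, (γ ^ m) ^ j = 0 := by
    have := geom_sum_mul (γ ^ m) n
    rw [h2, sub_self] at this
    rcases mul_eq_zero.mp this with h' | h'
    · exact h'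
    · exact absurd (sub_eq_zero.mp h') h1
  calc ∑ j : Fin n, γ ^ ((j : ℕ) * m) = ∑ j : Fin n, (γ ^ m) ^ (j : ℕ) := by
        refine Finset.sum_congr rfl fun j _ => ?_
        rw [← pow_mul, mul_comm]
    _ = ∑ j ∈ range n, (γ ^ m) ^ j := Fin.sum_univ_eq_sum_range _ n
    _ = 0 := key

lemma aux_vanish {E : Type*} [Field E] [Fintype E] {q r : ℕ} (hq : 2 ≤ q) (hr : 0 < r)
    (hE : Fintype.card E = q ^ (2 * r)) (y : E)
    (h : ∀ β : E, ∑ i ∈ Finset.range r, β ^ q ^ (2 * i) * y ^ q ^ (2 * i) = 0) : y = 0 := by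
  set P : Polynomial E := ∑ i ∈ Finset.range r, C (y ^ q ^ (2 * i)) * X ^ q ^ (2 * i) with hP
  have heval : ∀ β : E, P.eval β = 0 := by
    intro β
    rw [hP, Polynomial.eval_finset_sum]
    simpa [mul_comm] using h β
  have hdeg : P.natDegree < Fintype.card E := by
    have h1 : P.natDegree ≤ q ^ (2 * (r - 1)) := by
      rw [hP]
      refine Polynomial.natDegree_sum_le_of_forall_le _ _ fun i hi => ?_
      refine le_trans (Polynomial.natDegree_C_mul_X_pow_le _ _) ?_
      exact Nat.pow_le_pow_right (by omega) (by simp at hi; omega)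
    have h2 : q ^ (2 * (r - 1)) < q ^ (2 * r) :=
      Nat.pow_lt_pow_right (by omega) (by omega)
    rw [hE]; omega
  have hP0 : P = 0 :=
    Polynomial.eq_zero_of_natDegree_lt_card_of_eval_eq_zero' P Finset.univ
      (fun x _ => heval x) (by simpa using hdeg)
  have hc := congrArg (fun p : Polynomial E => p.coeff 1) hP0
  simp only [hP, Polynomial.finset_sum_coeff, Polynomial.coeff_C_mul,
    Polynomial.coeff_X_pow, Polynomial.coeff_zero] at hc
  rw [Finset.sum_eq_single_of_mem 0 (Finset.mem_range.mpr hr)] at hc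
  · simpa using hc
  · intro i hi hne
    have : 4 ≤ q ^ (2 * i) := by
      calc 4 = 2 ^ 2 := rfl
      _ ≤ q ^ (2 * i) :=
        (Nat.pow_le_pow_left hq 2).trans (Nat.pow_le_pow_right (by omega) (by omega))
    simp [show ¬ (1 = q ^ (2 * i)) by omega]

lemma aux_fixed {F E : Type*} [Field F] [Fintype F] [Field E] [Fintype E] [Algebra F E]
    {q : ℕ} (hq : 2 ≤ q) (hF : Fintype.card F = q ^ 2) (y : E) (hy : y ^ q ^ 2 = y) :
    ∃ c : F, algebraMap F E c = y := by
  classical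
  by_contra hc
  push_neg at hc
  have hq2 : 4 ≤ q ^ 2 := by nlinarith
  set P : Polynomial E := X ^ q ^ 2 - X with hP
  have hdeg : P.natDegree = q ^ 2 := by
    rw [hP]
    rw [Polynomial.natDegree_sub_eq_left_of_natDegree_lt (by simp; omega)]
    simp
  set s : Finset E := insert y (Finset.univ.image (algebraMap F E)) with hs
  have hcard : s.card = q ^ 2 + 1 := by
    rw [hs, Finset.card_insert_of_notMem (by
      simp only [Finset.mem_image, Finset.mem_univ, true_and]
      rintro ⟨c, hcy⟩
      exact hc c hcy),
      Finset.card_image_of_injective _ (algebraMap F E).injective, Finset.card_univ, hF]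
  have heval : ∀ x ∈ s, P.eval x = 0 := by
    intro x hx
    rw [hs, Finset.mem_insert] at hx
    rcases hx with rfl | hx
    · simp [hP, hy]
    · obtain ⟨c, -, rfl⟩ := Finset.mem_image.mp hx
      have : (algebraMap F E c) ^ q ^ 2 = algebraMap F E c := by
        rw [← map_pow, ← hF, FiniteField.pow_card]
      simp [hP, this]
  have hP0 : P = 0 :=
    Polynomial.eq_zero_of_natDegree_lt_card_of_eval_eq_zero' P s heval (by omega)
  have : P.coeff (q ^ 2) = 0 := by rw [hP0]; simp
  rw [hP] at this
  simp [Polynomial.coeff_X_pow, Polynomial.coeff_X, show ¬ (1 = q ^ 2) by omega] at this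



/-- **Hermitian self-orthogonality of the unit-memory convolutional BCH code
over `𝔽_{q²}`.** If `2 ≤ 2δ < ⌊n(q^r − 1)/(q^{2r} − 1)⌋`, the convolutional
code `V` generated by `G(D) = H̃₀ + H̃₁ D`, obtained from a parity check
matrix of the narrow-sense BCH code over `𝔽_{q²}` of designed distance
`2δ+1`, is Hermitian self-orthogonal: any two codewords `v(D) = u(D)G(D)`
and `x(D) = w(D)G(D)` satisfy `∑ₜ ∑ⱼ v_{t,j} (x_{t,j})^q = 0`. -/
theorem convolutional_BCH_hermitian_self_orthogonal
    {F E : Type*} [Field F] [Fintype F]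
    [Field E] [Fintype E] [Algebra F E]
    {q n r δ κ : ℕ}
    (hq : ∃ p k : ℕ, p.Prime ∧ 0 < k ∧ q = p ^ k)
    (hF : Fintype.card F = q ^ 2)
    (hn : 0 < n) (hgcd : Nat.gcd n q = 1)
    (hr : 0 < r) (hr1 : (q ^ 2) ^ r ≡ 1 [MOD n])
    (hrmin : ∀ s : ℕ, 0 < s → (q ^ 2) ^ s ≡ 1 [MOD n] → r ≤ s)
    (hE : Fintype.card E = q ^ (2 * r))
    (γ : E) (hγ : IsPrimitiveRoot γ n)
    (hδ : 2 ≤ 2 * δ) (hδ2 : 2 * δ < n * (q ^ r - 1) / (q ^ (2 * r) - 1))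
    (hκ : 1 ≤ κ)
    (H0 H1 : Matrix (Fin κ) (Fin n) F)
    (hind : LinearIndependent F
      (fun p : {p : Fin 2 × Fin κ // (![H0, H1] p.1) p.2 ≠ 0} => (![H0, H1] p.1.1) p.1.2))
    (h0 : ∀ j : Fin κ, H0 j ≠ 0)
    (hC : ∀ v : Fin n → F, (H0.mulVec v = 0 ∧ H1.mulVec v = 0) ↔
      (∀ z : ℕ, 1 ≤ z → z ≤ 2 * δ → ∑ j : Fin n, algebraMap F E (v j) * γ ^ ((j : ℕ) * z) = 0))
    (G : Matrix (Fin κ) (Fin n) (Polynomial F))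
    (hG : G = H0.map Polynomial.C + H1.map (fun a => Polynomial.C a * Polynomial.X))
    (u w : Fin κ → Polynomial F) :
    ∑ᶠ t : ℕ, ∑ j : Fin n,
      ((Matrix.vecMul u G) j).coeff t * (((Matrix.vecMul w G) j).coeff t) ^ q = 0 := by
  classical
  obtain ⟨p, k, hp, hk, hqpk⟩ := hq
  have hq2 : 2 ≤ q := by
    rw [hqpk]
    calc 2 ≤ p := hp.two_le
    _ ≤ p ^ k := Nat.le_self_pow (by omega) p
  haveI hFp : CharP F p := aux_charP F hp (by omega : 0 < 2 * k)
    (by rw [hF, hqpk, ← pow_mul, mul_comm k 2])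
  haveI hEp : CharP E p := aux_charP E hp (by positivity : 0 < 2 * r * k)
    (by rw [hE, hqpk, ← pow_mul, mul_comm k (2 * r)])
  haveI : ExpChar F p := ExpChar.prime hp
  haveI : ExpChar E p := ExpChar.prime hp
  -- Frobenius powers are additive on sums
  have hEsum : ∀ (m : ℕ) {ι : Type} (s : Finset ι) (f : ι → E),
      (∑ j ∈ s, f j) ^ q ^ m = ∑ j ∈ s, (f j) ^ q ^ m := by
    intro m ι s f
    have hh : (q : ℕ) ^ m = p ^ (k * m) := by rw [hqpk, ← pow_mul]
    rw [hh]
    have h2 := map_sum (iterateFrobenius E p (k * m)) f s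
    simp only [iterateFrobenius_def] at h2
    exact h2
  have hFaddq : ∀ a b : F, (a + b) ^ q = a ^ q + b ^ q := by
    intro a b
    have hh : (q : ℕ) = p ^ k := hqpk
    rw [hh]
    exact map_add (iterateFrobenius F p k) a b
  have hEaddq : ∀ a b : E, (a + b) ^ q = a ^ q + b ^ q := by
    intro a b
    rw [hqpk]
    exact map_add (iterateFrobenius E p k) a b
  have hEsumq : ∀ {ι : Type} (s : Finset ι) (f : ι → E),
      (∑ j ∈ s, f j) ^ q = ∑ j ∈ s, (f j) ^ q := by
    intro ι s f
    have := hEsum 1 s f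
    simpa [pow_one] using this
  -- fixed points
  have hFfix : ∀ (c : F) (i : ℕ), c ^ q ^ (2 * i) = c := by
    intro c i
    rw [show (q : ℕ) ^ (2 * i) = (q ^ 2) ^ i by rw [← pow_mul], ← hF]
    exact FiniteField.pow_card_pow i c
  have hEfix : ∀ x : E, x ^ q ^ (2 * r) = x := by
    intro x
    rw [← hE]
    exact FiniteField.pow_card x
  have halgfix : ∀ (c : F) (i : ℕ), (algebraMap F E c) ^ q ^ (2 * i) = algebraMap F E c := by
    intro c i
    rw [← map_pow, hFfix]
  -- the trace map
  set T : E → E := fun x => ∑ i ∈ Finset.range r, x ^ q ^ (2 * i) with hT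
  have hTfix : ∀ x : E, (T x) ^ q ^ 2 = T x := by
    intro x
    have hTq : (T x) ^ q ^ 2 = ∑ i ∈ Finset.range r, x ^ q ^ (2 * (i + 1)) := by
      simp only [hT]
      rw [show (q : ℕ) ^ 2 = q ^ (2 * 1) by norm_num, hEsum (2 * 1)]
      refine Finset.sum_congr rfl fun i _ => ?_
      rw [← pow_mul, ← pow_add]
      ring_nf
    rw [hTq]
    have h1 := Finset.sum_range_succ' (fun i => x ^ q ^ (2 * i)) r
    have h2 := Finset.sum_range_succ (fun i => x ^ q ^ (2 * i)) r
    simp only [hT]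
    have h3 : x ^ q ^ (2 * 0) = x := by norm_num
    have h4 : x ^ q ^ (2 * r) = x := hEfix x
    rw [h3] at h1
    rw [h4] at h2
    have h5 := h1.symm.trans h2
    exact add_right_cancel h5
  have hsubF : ∀ x : E, ∃ c : F, algebraMap F E c = T x :=
    fun x => aux_fixed hq2 hF (T x) (hTfix x)
  choose τ hτ using hsubF
  -- the bound
  have hbound : (2 * δ + 1) * (q ^ r + 1) ≤ n := by
    have ha : 2 ≤ q ^ r := le_trans hq2 (Nat.le_self_pow (by omega) q)
    have h2r : q ^ (2 * r) = q ^ r * q ^ r := by rw [two_mul, pow_add]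
    have hfac : q ^ (2 * r) - 1 = (q ^ r - 1) * (q ^ r + 1) := by
      rw [h2r]
      obtain ⟨b, hb⟩ : ∃ b, q ^ r = b + 1 := ⟨q ^ r - 1, by omega⟩
      rw [hb]
      simp only [Nat.add_sub_cancel]
      have h' : (b + 1) * (b + 1) = b * (b + 1 + 1) + 1 := by ring
      omega
    rw [hfac, ← Nat.div_div_eq_div_mul, Nat.mul_div_cancel _ (by omega : 0 < q ^ r - 1)] at hδ2
    have := (Nat.le_div_iff_mul_le (by omega : 0 < q ^ r + 1)).mp (by omega : 2 * δ + 1 ≤ n / (q ^ r + 1))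
    exact this
  -- vanishing geometric sums
  have hzero : ∀ z z' i : ℕ, 1 ≤ z → z ≤ 2 * δ → 1 ≤ z' → z' ≤ 2 * δ → i < r →
      ∑ j : Fin n, γ ^ ((j : ℕ) * (z * q ^ (2 * i + 1) + z')) = 0 :=
    fun z z' i h1 h2 h3 h4 h5 =>
      aux_geom hγ (aux_notdvd hq2 hr hr1 hbound h1 h2 h3 h4 h5)
  -- the bilinear form
  set B : LinearMap.BilinForm F (Fin n → F) := LinearMap.mk₂ F (fun x y => ∑ j, x j * y j)
    (by intros x y z; simp [add_mul, Finset.sum_add_distrib])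
    (by intros c x y; simp [Finset.mul_sum, mul_assoc, smul_eq_mul])
    (by intros x y z; simp [mul_add, Finset.sum_add_distrib])
    (by intros c x y; simp only [smul_eq_mul, Pi.smul_apply, Finset.mul_sum]; congr 1;
        funext j; ring) with hB
  have hBapp : ∀ x y : Fin n → F, B x y = ∑ j, x j * y j := fun x y => rfl
  have hBnondeg : B.Nondegenerate := by
    refine ⟨fun x hx => ?_, fun x hx => ?_⟩ <;>
    · funext j
      have := hx (Pi.single j 1)
      simp only [hBapp, Pi.single_apply, mul_ite, ite_mul] at this
      simpa using this
  have hBrefl : B.IsRefl := by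
    intro x y h
    rw [hBapp] at h ⊢
    rw [← h]
    exact Finset.sum_congr rfl fun j _ => mul_comm _ _
  -- the span of trace vectors
  set S : Set (Fin n → F) :=
    {v | ∃ (β : E) (z : ℕ), 1 ≤ z ∧ z ≤ 2 * δ ∧
      v = fun j : Fin n => τ (β * γ ^ ((j : ℕ) * z))} with hS
  set W : Submodule F (Fin n → F) := Submodule.span F S with hW
  -- key algebraic identity
  have halgsum : ∀ (β : E) (z : ℕ) (v : Fin n → F),
      algebraMap F E (∑ j : Fin n, τ (β * γ ^ ((j : ℕ) * z)) * v j)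
        = ∑ i ∈ Finset.range r,
            β ^ q ^ (2 * i) * (∑ j : Fin n, algebraMap F E (v j) * γ ^ ((j : ℕ) * z)) ^ q ^ (2 * i) := by
    intro β z v
    rw [map_sum]
    have hterm : ∀ j : Fin n, algebraMap F E (τ (β * γ ^ ((j : ℕ) * z)) * v j)
        = ∑ i ∈ Finset.range r,
            β ^ q ^ (2 * i) * γ ^ ((j : ℕ) * z * q ^ (2 * i)) * algebraMap F E (v j) := by
      intro j
      rw [map_mul, hτ]
      simp only [hT]
      rw [Finset.sum_mul]
      refine Finset.sum_congr rfl fun i _ => ?_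
      rw [mul_pow, ← pow_mul]
    rw [Finset.sum_congr rfl fun j _ => hterm j, Finset.sum_comm]
    refine Finset.sum_congr rfl fun i _ => ?_
    have hφpow : (∑ j : Fin n, algebraMap F E (v j) * γ ^ ((j : ℕ) * z)) ^ q ^ (2 * i)
        = ∑ j : Fin n, algebraMap F E (v j) * γ ^ ((j : ℕ) * z * q ^ (2 * i)) := by
      rw [hEsum (2 * i)]
      refine Finset.sum_congr rfl fun j _ => ?_
      rw [mul_pow, halgfix, ← pow_mul]
    rw [hφpow, Finset.mul_sum]
    refine Finset.sum_congr rfl fun j _ => ?_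
    ring
  -- membership in the orthogonal complement of W
  have hmemorth : ∀ v : Fin n → F, v ∈ B.orthogonal W ↔
      (∀ z : ℕ, 1 ≤ z → z ≤ 2 * δ →
        ∑ j : Fin n, algebraMap F E (v j) * γ ^ ((j : ℕ) * z) = 0) := by
    intro v
    constructor
    · intro hv z hz1 hz2
      refine aux_vanish hq2 hr hE _ (fun β => ?_)
      have hgen : (fun j : Fin n => τ (β * γ ^ ((j : ℕ) * z))) ∈ W :=
        Submodule.subset_span ⟨β, z, hz1, hz2, rfl⟩
      have h1 := hv _ hgen
      rw [hBapp] at h1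
      have h2 := congrArg (algebraMap F E) h1
      rw [halgsum, map_zero] at h2
      exact h2
    · intro hv y hy
      induction hy using Submodule.span_induction with
      | mem s hs =>
        obtain ⟨β, z, hz1, hz2, rfl⟩ := hs
        have h1 : algebraMap F E (B (fun j : Fin n => τ (β * γ ^ ((j : ℕ) * z))) v) = 0 := by
          rw [hBapp, halgsum, Finset.sum_congr rfl fun i _ => by rw [hv z hz1 hz2]]
          refine Finset.sum_eq_zero fun i _ => ?_
          rw [zero_pow (pow_ne_zero _ (by omega : q ≠ 0)), mul_zero]
        have h2 : algebraMap F E (B (fun j : Fin n => τ (β * γ ^ ((j : ℕ) * z))) v)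
            = algebraMap F E 0 := by rw [h1, map_zero]
        exact (algebraMap F E).injective h2
      | zero => rw [map_zero, LinearMap.zero_apply]
      | add a b _ _ ha hb => rw [map_add, LinearMap.add_apply, ha, hb, add_zero]
      | smul c a _ ha => rw [map_smul, LinearMap.smul_apply, ha, smul_zero]
  have hker : ∀ v : Fin n → F,
      (H0.mulVec v = 0 ∧ H1.mulVec v = 0) ↔ v ∈ B.orthogonal W := by
    intro v
    rw [hC v, hmemorth v]
  -- the Frobenius image of W is in the code
  have hWq : ∀ h : Fin n → F, h ∈ W → ∀ z' : ℕ, 1 ≤ z' → z' ≤ 2 * δ →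
      ∑ j : Fin n, algebraMap F E ((h j) ^ q) * γ ^ ((j : ℕ) * z') = 0 := by
    intro h hh
    induction hh using Submodule.span_induction with
    | mem s hs =>
      obtain ⟨β, z, hz1, hz2, rfl⟩ := hs
      intro z' hz'1 hz'2
      have hterm : ∀ j : Fin n, algebraMap F E ((τ (β * γ ^ ((j : ℕ) * z))) ^ q)
          = ∑ i ∈ Finset.range r, β ^ (q ^ (2 * i) * q) * γ ^ ((j : ℕ) * (z * (q ^ (2 * i) * q))) := by
        intro j
        rw [map_pow, hτ]
        simp only [hT]
        rw [hEsumq]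
        refine Finset.sum_congr rfl fun i _ => ?_
        rw [← pow_mul, mul_pow, ← pow_mul]
        congr 1
        congr 1
        ring
      calc ∑ j : Fin n, algebraMap F E ((τ (β * γ ^ ((j : ℕ) * z))) ^ q) * γ ^ ((j : ℕ) * z')
          = ∑ j : Fin n, ∑ i ∈ Finset.range r,
              β ^ (q ^ (2 * i) * q) * γ ^ ((j : ℕ) * (z * (q ^ (2 * i) * q) + z')) := by
            refine Finset.sum_congr rfl fun j _ => ?_
            rw [hterm j, Finset.sum_mul]
            refine Finset.sum_congr rfl fun i _ => ?_
            rw [mul_assoc, ← pow_add, ← Nat.mul_add]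
        _ = ∑ i ∈ Finset.range r, β ^ (q ^ (2 * i) * q) *
              ∑ j : Fin n, γ ^ ((j : ℕ) * (z * (q ^ (2 * i) * q) + z')) := by
            rw [Finset.sum_comm]
            exact Finset.sum_congr rfl fun i _ => by rw [Finset.mul_sum]
        _ = 0 := by
            refine Finset.sum_eq_zero fun i hi => ?_
            have hqq : q ^ (2 * i) * q = q ^ (2 * i + 1) := by rw [pow_succ]
            rw [hqq, hzero z z' i hz1 hz2 hz'1 hz'2 (Finset.mem_range.mp hi), mul_zero]
    | zero =>
      intro z' _ _
      have : ∀ j : Fin n, ((0 : Fin n → F) j) ^ q = 0 := fun j => by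
        simp [zero_pow (by omega : q ≠ 0)]
      simp only [this, map_zero, zero_mul, Finset.sum_const_zero]
    | add a b _ _ ha hb =>
      intro z' h1 h2
      have : ∀ j : Fin n, algebraMap F E (((a + b) j) ^ q)
          = algebraMap F E ((a j) ^ q) + algebraMap F E ((b j) ^ q) := fun j => by
        rw [Pi.add_apply, hFaddq, map_add]
      rw [Finset.sum_congr rfl fun j _ => by rw [this j, add_mul]]
      rw [Finset.sum_add_distrib, ha z' h1 h2, hb z' h1 h2, add_zero]
    | smul c a _ ha =>
      intro z' h1 h2
      have : ∀ j : Fin n, algebraMap F E (((c • a) j) ^ q)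
          = algebraMap F E (c ^ q) * algebraMap F E ((a j) ^ q) := fun j => by
        rw [Pi.smul_apply, smul_eq_mul, mul_pow, map_mul]
      rw [Finset.sum_congr rfl fun j _ => by rw [this j, mul_assoc], ← Finset.mul_sum,
        ha z' h1 h2, mul_zero]
  -- rows of H0 and H1 are in W
  have hrowW : ∀ A : Matrix (Fin κ) (Fin n) F, (A = H0 ∨ A = H1) → ∀ i : Fin κ, A i ∈ W := by
    intro A hA i
    have hmem : A i ∈ B.orthogonal (B.orthogonal W) := by
      intro v hv
      have hv' := (hker v).mpr hv
      have hAv : A.mulVec v = 0 := by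
        rcases hA with rfl | rfl
        · exact hv'.1
        · exact hv'.2
      have h1 : ∑ j : Fin n, A i j * v j = 0 := by
        have := congrFun hAv i
        simpa [Matrix.mulVec, dotProduct] using this
      rw [hBapp, ← h1]
      exact Finset.sum_congr rfl fun j _ => mul_comm _ _
    rwa [LinearMap.BilinForm.orthogonal_orthogonal hBnondeg hBrefl] at hmem
  -- hermitian orthogonality of rows
  have horth : ∀ A A' : Matrix (Fin κ) (Fin n) F, (A = H0 ∨ A = H1) → (A' = H0 ∨ A' = H1) →
      ∀ i i' : Fin κ, ∑ j : Fin n, A i j * (A' i' j) ^ q = 0 := by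
    intro A A' hA hA' i i'
    have h1 := hWq (A' i') (hrowW A' hA' i')
    have h2 := (hC (fun j => (A' i' j) ^ q)).mpr h1
    have h3 : A.mulVec (fun j => (A' i' j) ^ q) = 0 := by
      rcases hA with rfl | rfl
      · exact h2.1
      · exact h2.2
    have := congrFun h3 i
    simpa [Matrix.mulVec, dotProduct] using this
  -- the row span
  set RS : Submodule F (Fin n → F) :=
    Submodule.span F ((Set.range fun i => H0 i) ∪ (Set.range fun i => H1 i)) with hRS
  have hkey1 : ∀ a : Fin n → F,
      a ∈ ((Set.range fun i => H0 i) ∪ (Set.range fun i => H1 i) : Set (Fin n → F)) →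
      ∀ b : Fin n → F, b ∈ RS → ∑ j : Fin n, a j * (b j) ^ q = 0 := by
    intro a ha b hb
    induction hb using Submodule.span_induction with
    | mem s hs =>
      rcases ha with ⟨i, rfl⟩ | ⟨i, rfl⟩ <;> rcases hs with ⟨i', rfl⟩ | ⟨i', rfl⟩
      · exact horth H0 H0 (Or.inl rfl) (Or.inl rfl) i i'
      · exact horth H0 H1 (Or.inl rfl) (Or.inr rfl) i i'
      · exact horth H1 H0 (Or.inr rfl) (Or.inl rfl) i i'
      · exact horth H1 H1 (Or.inr rfl) (Or.inr rfl) i i'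
    | zero =>
      simp [zero_pow (by omega : q ≠ 0)]
    | add x y _ _ hx hy =>
      rw [Finset.sum_congr rfl fun j _ => by
        rw [Pi.add_apply, hFaddq, mul_add]]
      rw [Finset.sum_add_distrib, hx, hy, add_zero]
    | smul c x _ hx =>
      rw [Finset.sum_congr rfl fun j _ => by
        rw [Pi.smul_apply, smul_eq_mul, mul_pow, mul_comm (c ^ q) _, ← mul_assoc]]
      rw [← Finset.sum_mul, hx, zero_mul]
  have hkey : ∀ a : Fin n → F, a ∈ RS → ∀ b : Fin n → F, b ∈ RS →
      ∑ j : Fin n, a j * (b j) ^ q = 0 := by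
    intro a ha b hb
    induction ha using Submodule.span_induction with
    | mem s hs => exact hkey1 s hs b hb
    | zero => simp
    | add x y _ _ hx hy =>
      rw [Finset.sum_congr rfl fun j _ => by rw [Pi.add_apply, add_mul]]
      rw [Finset.sum_add_distrib, hx, hy, add_zero]
    | smul c x _ hx =>
      rw [Finset.sum_congr rfl fun j _ => by rw [Pi.smul_apply, smul_eq_mul, mul_assoc]]
      rw [← Finset.mul_sum, hx, mul_zero]
  -- coefficient vectors are in the row span
  have hcoeff : ∀ (uu : Fin κ → Polynomial F) (t : ℕ),
      (fun j => ((Matrix.vecMul uu G) j).coeff t) ∈ RS := by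
    intro uu t
    have hform : (fun j => ((Matrix.vecMul uu G) j).coeff t)
        = ∑ i : Fin κ, (((uu i).coeff t) • H0 i + ((uu i * Polynomial.X).coeff t) • H1 i) := by
      funext j
      have hv : (Matrix.vecMul uu G) j = ∑ i, uu i * G i j := rfl
      rw [hv, Polynomial.finset_sum_coeff, Finset.sum_apply]
      refine Finset.sum_congr rfl fun i _ => ?_
      rw [hG]
      simp only [Matrix.add_apply, Matrix.map_apply]
      rw [mul_add, Polynomial.coeff_add, Polynomial.coeff_mul_C]
      have hx : uu i * (Polynomial.C (H1 i j) * Polynomial.X)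
          = (uu i * Polynomial.X) * Polynomial.C (H1 i j) := by ring
      rw [hx, Polynomial.coeff_mul_C]
      simp [smul_eq_mul]
    rw [hform]
    exact Submodule.sum_mem _ fun i _ => Submodule.add_mem _
      (Submodule.smul_mem _ _ (Submodule.subset_span (Or.inl ⟨i, rfl⟩)))
      (Submodule.smul_mem _ _ (Submodule.subset_span (Or.inr ⟨i, rfl⟩)))
  have hall : ∀ t : ℕ, ∑ j : Fin n,
      ((Matrix.vecMul u G) j).coeff t * (((Matrix.vecMul w G) j).coeff t) ^ q = 0 :=
    fun t => hkey _ (hcoeff u t) _ (hcoeff w t)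
  calc ∑ᶠ t : ℕ, ∑ j : Fin n,
        ((Matrix.vecMul u G) j).coeff t * (((Matrix.vecMul w G) j).coeff t) ^ q
      = ∑ᶠ _ : ℕ, (0 : F) := finsum_congr hall
    _ = 0 := finsum_zero
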